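/- For every k ≥ 1, every finite point set S ⊂ ℝ² (with distinct x-coordinates and distinct y-coordinates) can be colored with k colors so that every bottomless rectangle containing at least 3k−2 points of S contains at least one point of each color. -/

import Mathlib

open Finset

namespace BR

abbrev Pt : Type := ℝ × ℝ

noncomputable def strip (T : Finset Pt) (a b : ℝ) : Finset Pt :=
  T.filter fun p => a ≤ p.1 ∧ p.1 ≤ b

noncomputable def btw (T : Finset Pt) (x y : ℝ) : Finset Pt :=
  T.filter fun p => x < p.1 ∧ p.1 < y

def ColoredIn (k : ℕ) (T : Finset Pt) (σ : Pt → Option (Fin k)) : Prop :=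
  ∀ p, σ p ≠ none → p ∈ T

def AinvC (k : ℕ) (T : Finset Pt) (σ : Pt → Option (Fin k)) (c : Fin k) : Prop :=
  ∀ a b : ℝ, (∀ q ∈ strip T a b, σ q ≠ some c) → (strip T a b).card ≤ 3 * k - 3

def Binv (k : ℕ) (T : Finset Pt) (σ : Pt → Option (Fin k)) : Prop :=
  ∀ (c : Fin k) (q₁ q₂ : Pt), σ q₁ = some c → σ q₂ = some c → q₁.1 < q₂.1 →
    (∀ r, σ r = some c → ¬(q₁.1 < r.1 ∧ r.1 < q₂.1)) →
    k - 1 ≤ (btw T q₁.1 q₂.1).card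

def Extends (k : ℕ) (σ τ : Pt → Option (Fin k)) : Prop :=
  ∀ p c, σ p = some c → τ p = some c

lemma Extends.refl (k : ℕ) (σ : Pt → Option (Fin k)) : Extends k σ σ := fun _ _ h => h

lemma Extends.trans {k : ℕ} {σ τ ρ : Pt → Option (Fin k)} (h1 : Extends k σ τ)
    (h2 : Extends k τ ρ) : Extends k σ ρ := fun p c h => h2 p c (h1 p c h)

lemma AinvC.mono {k : ℕ} {T : Finset Pt} {σ τ : Pt → Option (Fin k)} {c : Fin k}
    (hA : AinvC k T σ c) (h : Extends k σ τ) : AinvC k T τ c := by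
  intro a b hfree
  exact hA a b fun q hq hqc => hfree q hq (h q c hqc)

lemma Binv.subset {k : ℕ} {T U : Finset Pt} {σ : Pt → Option (Fin k)}
    (hB : Binv k T σ) (h : T ⊆ U) : Binv k U σ := by
  intro c q₁ q₂ h1 h2 hlt hno
  exact le_trans (hB c q₁ q₂ h1 h2 hlt hno)
    (card_le_card (filter_subset_filter _ h))

/-- The window lemma: in a full gap (a `c`-free strip with `3k-2` points) there is an
uncolored point with at least `k-1` points of the strip on each side. -/
lemma exists_split (k : ℕ) (hk : 1 ≤ k) (T : Finset Pt) (σ : Pt → Option (Fin k)) (c : Fin k)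
    (a b : ℝ)
    (hx : Set.InjOn Prod.fst (T : Set Pt)) (hCI : ColoredIn k T σ) (hB : Binv k T σ)
    (hV : (strip T a b).card = 3 * k - 2)
    (hfree : ∀ q ∈ strip T a b, σ q ≠ some c) :
    ∃ q ∈ strip T a b, σ q = none ∧
      k - 1 ≤ ((strip T a b).filter fun u => u.1 < q.1).card ∧
      k - 1 ≤ ((strip T a b).filter fun u => q.1 < u.1).card := by
  classical
  set V := strip T a b with hVdef
  have hVT : V ⊆ T := filter_subset _ _
  have hxV : Set.InjOn Prod.fst (V : Set Pt) := hx.mono (by exact_mod_cast hVT)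
  set f : Pt → ℕ := fun v => (V.filter fun u => u.1 < v.1).card with hfdef
  have hmono : ∀ u ∈ V, ∀ v ∈ V, u.1 < v.1 → f u < f v := by
    intro u hu v hv huv
    apply card_lt_card
    rw [Finset.ssubset_iff_of_subset]
    · exact ⟨u, mem_filter.mpr ⟨hu, huv⟩, by simp [lt_irrefl]⟩
    · intro w hw
      rw [mem_filter] at hw ⊢
      exact ⟨hw.1, lt_trans hw.2 huv⟩
  have hneq : ∀ u ∈ V, ∀ v ∈ V, u ≠ v → u.1 ≠ v.1 := by
    intro u hu v hv huv h
    exact huv (hxV (mem_coe.mpr hu) (mem_coe.mpr hv) h)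
  have finj : Set.InjOn f (V : Set Pt) := by
    intro u hu v hv h
    by_contra hne'
    have hx' := hneq u (mem_coe.mp hu) v (mem_coe.mp hv) hne'
    rcases lt_or_gt_of_ne hx' with hlt | hlt
    · exact absurd h (ne_of_lt (hmono u (mem_coe.mp hu) v (mem_coe.mp hv) hlt))
    · exact absurd h.symm (ne_of_lt (hmono v (mem_coe.mp hv) u (mem_coe.mp hu) hlt))
  have fub : ∀ v ∈ V, f v ≤ 3 * k - 3 := by
    intro v hv
    have : (V.filter fun u => u.1 < v.1) ⊆ V.erase v := by
      intro w hw
      rw [mem_filter] at hw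
      exact mem_erase.mpr ⟨fun h => absurd hw.2 (by rw [h]; exact lt_irrefl _), hw.1⟩
    calc f v ≤ (V.erase v).card := card_le_card this
      _ = 3 * k - 2 - 1 := by rw [card_erase_of_mem hv, hV]
      _ ≤ 3 * k - 3 := by omega
  have himgV : V.image f = range (3 * k - 2) := by
    apply Finset.eq_of_subset_of_card_le
    · intro j hj
      rw [mem_image] at hj
      obtain ⟨v, hv, rfl⟩ := hj
      rw [mem_range]
      have := fub v hv
      omega
    · rw [card_range, card_image_of_injOn finj, hV]
  set W := V.filter (fun v => k - 1 ≤ f v ∧ f v ≤ 2 * k - 2) with hWdef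
  have hWV : W ⊆ V := filter_subset _ _
  have hWcard : W.card = k := by
    have h1 : W.card = (W.image f).card :=
      (card_image_of_injOn (finj.mono (by exact_mod_cast hWV))).symm
    have h2 : W.image f = (range (3 * k - 2)).filter (fun j => k - 1 ≤ j ∧ j ≤ 2 * k - 2) := by
      ext j
      simp only [mem_image, mem_filter, hWdef]
      constructor
      · rintro ⟨v, ⟨hvV, hP⟩, rfl⟩
        refine ⟨?_, hP⟩
        rw [← himgV, mem_image]
        exact ⟨v, hvV, rfl⟩
      · rintro ⟨hj, hP⟩
        rw [← himgV, mem_image] at hj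
        obtain ⟨v, hv, rfl⟩ := hj
        exact ⟨v, ⟨hv, hP⟩, rfl⟩
    have h3 : (range (3 * k - 2)).filter (fun j => k - 1 ≤ j ∧ j ≤ 2 * k - 2)
        = Finset.Icc (k - 1) (2 * k - 2) := by
      ext j
      simp only [mem_filter, mem_range, Finset.mem_Icc]
      omega
    rw [h1, h2, h3, Nat.card_Icc]
    omega
  have hWq : ∃ q ∈ W, σ q = none := by
    by_contra hcol
    push_neg at hcol
    have hmap : ∀ v ∈ W, (σ v).getD c ∈ (univ : Finset (Fin k)).erase c := by
      intro v hv
      obtain ⟨d, hd⟩ := Option.ne_none_iff_exists'.mp (hcol v hv)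
      rw [hd]
      simp only [Option.getD_some, mem_erase, mem_univ, and_true]
      intro h
      exact hfree v (hWV hv) (by rw [hd, h])
    have hlt : ((univ : Finset (Fin k)).erase c).card < W.card := by
      rw [card_erase_of_mem (mem_univ c), card_univ, Fintype.card_fin, hWcard]
      omega
    obtain ⟨q₁, hq₁, q₂, hq₂, hne12, heq⟩ := exists_ne_map_eq_of_card_lt_of_maps_to hlt hmap
    obtain ⟨d₁, hd₁⟩ := Option.ne_none_iff_exists'.mp (hcol q₁ hq₁)
    obtain ⟨d₂, hd₂⟩ := Option.ne_none_iff_exists'.mp (hcol q₂ hq₂)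
    have hdd : d₁ = d₂ := by simpa [hd₁, hd₂] using heq
    subst hdd
    set d := d₁ with hddef
    set M := W.filter (fun v => σ v = some d) with hMdef
    have hq₁M : q₁ ∈ M := mem_filter.mpr ⟨hq₁, hd₁⟩
    have hq₂M : q₂ ∈ M := mem_filter.mpr ⟨hq₂, hd₂⟩
    have hM2 : 1 < M.card := one_lt_card.mpr ⟨q₁, hq₁M, q₂, hq₂M, hne12⟩
    obtain ⟨v₁, hv₁M, hv₁min⟩ := M.exists_min_image f ⟨q₁, hq₁M⟩
    have hMe : (M.erase v₁).Nonempty := by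
      rw [← card_pos, card_erase_of_mem hv₁M]; omega
    obtain ⟨v₂, hv₂M', hv₂min⟩ := (M.erase v₁).exists_min_image f hMe
    have hv₂M : v₂ ∈ M := mem_of_mem_erase hv₂M'
    have hv12 : v₁ ≠ v₂ := (ne_of_mem_erase hv₂M').symm
    have hv₁W : v₁ ∈ W := (mem_filter.mp hv₁M).1
    have hv₂W : v₂ ∈ W := (mem_filter.mp hv₂M).1
    have hv₁V : v₁ ∈ V := hWV hv₁W
    have hv₂V : v₂ ∈ V := hWV hv₂W
    have hσv₁ : σ v₁ = some d := (mem_filter.mp hv₁M).2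
    have hσv₂ : σ v₂ = some d := (mem_filter.mp hv₂M).2
    have hv₁f : k - 1 ≤ f v₁ ∧ f v₁ ≤ 2 * k - 2 := (mem_filter.mp hv₁W).2
    have hv₂f : k - 1 ≤ f v₂ ∧ f v₂ ≤ 2 * k - 2 := (mem_filter.mp hv₂W).2
    have hxlt : v₁.1 < v₂.1 := by
      rcases lt_trichotomy v₁.1 v₂.1 with h | h | h
      · exact h
      · exact absurd h (hneq v₁ hv₁V v₂ hv₂V hv12)
      · exact absurd (hv₁min v₂ hv₂M) (not_le.mpr (hmono v₂ hv₂V v₁ hv₁V h))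
    have hflt : f v₁ < f v₂ := hmono v₁ hv₁V v₂ hv₂V hxlt
    have hv₁b : a ≤ v₁.1 ∧ v₁.1 ≤ b := (mem_filter.mp hv₁V).2
    have hv₂b : a ≤ v₂.1 ∧ v₂.1 ≤ b := (mem_filter.mp hv₂V).2
    have hmemV : ∀ r : Pt, r ∈ T → v₁.1 < r.1 → r.1 < v₂.1 → r ∈ V := by
      intro r hrT h1 h2
      exact mem_filter.mpr ⟨hrT, le_of_lt (lt_of_le_of_lt hv₁b.1 h1),
        le_of_lt (lt_of_lt_of_le h2 hv₂b.2)⟩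
    have hnob : ∀ r, σ r = some d → ¬(v₁.1 < r.1 ∧ r.1 < v₂.1) := by
      rintro r hr ⟨h1, h2⟩
      have hrT : r ∈ T := hCI r (by rw [hr]; exact Option.some_ne_none _)
      have hrV : r ∈ V := hmemV r hrT h1 h2
      have hfr1 : f v₁ < f r := hmono v₁ hv₁V r hrV h1
      have hfr2 : f r < f v₂ := hmono r hrV v₂ hv₂V h2
      have hrW : r ∈ W := mem_filter.mpr ⟨hrV, by omega⟩
      have hrM : r ∈ M := mem_filter.mpr ⟨hrW, hr⟩
      have hrne : r ≠ v₁ := by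
        intro h; rw [h] at hfr1; exact lt_irrefl _ hfr1
      have := hv₂min r (mem_erase.mpr ⟨hrne, hrM⟩)
      omega
    have hBc := hB d v₁ v₂ hσv₁ hσv₂ hxlt hnob
    have hcnt : (btw T v₁.1 v₂.1).card ≤ (Finset.Ioo (f v₁) (f v₂)).card := by
      apply card_le_card_of_injOn f
      · intro u hu
        rw [btw, mem_coe, mem_filter] at hu
        have huV : u ∈ V := hmemV u hu.1 hu.2.1 hu.2.2
        rw [mem_coe, Finset.mem_Ioo]
        exact ⟨hmono v₁ hv₁V u huV hu.2.1, hmono u huV v₂ hv₂V hu.2.2⟩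
      · apply finj.mono
        intro u hu
        rw [mem_coe, btw, mem_filter] at hu
        exact mem_coe.mpr (hmemV u hu.1 hu.2.1 hu.2.2)
    rw [Nat.card_Ioo] at hcnt
    have hk2 : 2 ≤ k := by
      have : 1 < W.card := one_lt_card.mpr ⟨q₁, hq₁, q₂, hq₂, hne12⟩
      omega
    omega
  obtain ⟨q, hqW, hqnone⟩ := hWq
  have hqV : q ∈ V := hWV hqW
  have hqf : k - 1 ≤ f q ∧ f q ≤ 2 * k - 2 := (mem_filter.mp hqW).2
  refine ⟨q, hqV, hqnone, hqf.1, ?_⟩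
  -- right side count
  have hpart : (V.filter fun u => u.1 < q.1) ∪ (V.filter fun u => q.1 < u.1) = V.erase q := by
    ext u
    simp only [mem_union, mem_filter, mem_erase]
    constructor
    · rintro (⟨hu, h⟩ | ⟨hu, h⟩)
      · exact ⟨fun he => absurd h (by rw [he]; exact lt_irrefl _), hu⟩
      · exact ⟨fun he => absurd h (by rw [he]; exact lt_irrefl _), hu⟩
    · rintro ⟨hne, hu⟩
      rcases lt_or_gt_of_ne (hneq u hu q hqV hne) with h | h
      · exact Or.inl ⟨hu, h⟩
      · exact Or.inr ⟨hu, h⟩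
  have hdisj : Disjoint (V.filter fun u => u.1 < q.1) (V.filter fun u => q.1 < u.1) := by
    rw [Finset.disjoint_left]
    intro u h1 h2
    rw [mem_filter] at h1 h2
    exact absurd (lt_trans h1.2 h2.2) (lt_irrefl _)
  have hfq : f q = (V.filter fun u => u.1 < q.1).card := rfl
  have hsum := card_union_of_disjoint hdisj
  rw [hpart, card_erase_of_mem hqV, hV] at hsum
  omega

/-- Union of two overlapping intervals is an interval. -/
lemma interval_union {a b a' b' x₀ x : ℝ} (h1 : a ≤ x₀) (h2 : x₀ ≤ b) (h3 : a' ≤ x₀)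
    (h4 : x₀ ≤ b') (h5 : min a a' ≤ x) (h6 : x ≤ max b b') :
    (a ≤ x ∧ x ≤ b) ∨ (a' ≤ x ∧ x ≤ b') := by
  rcases le_total x x₀ with h | h
  · rcases min_le_iff.mp h5 with h' | h'
    · exact Or.inl ⟨h', le_trans h h2⟩
    · exact Or.inr ⟨h', le_trans h h4⟩
  · rcases le_max_iff.mp h6 with h' | h'
    · exact Or.inl ⟨le_trans h1 h, h'⟩
    · exact Or.inr ⟨le_trans h3 h, h'⟩

/-- One step of the repair loop: restore the gap invariant for color `c` after the
arrival of point `p`. -/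
lemma fix_color (k : ℕ) (hk : 1 ≤ k) (T' : Finset Pt) (p : Pt) (hp : p ∉ T')
    (hx : Set.InjOn Prod.fst ((insert p T' : Finset Pt) : Set Pt))
    (σ' σ'' : Pt → Option (Fin k)) (c : Fin k)
    (hA' : ∀ c', AinvC k T' σ' c')
    (hext : Extends k σ' σ'')
    (hCI : ColoredIn k (insert p T') σ'')
    (hB : Binv k (insert p T') σ'') :
    ∃ σ''' : Pt → Option (Fin k), Extends k σ'' σ''' ∧ ColoredIn k (insert p T') σ''' ∧
      Binv k (insert p T') σ''' ∧ AinvC k (insert p T') σ''' c := by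
  classical
  set T := insert p T' with hTdef
  -- the key bound for `c`-free strips (w.r.t. σ'')
  have key : ∀ a' b' : ℝ, (∀ r ∈ strip T a' b', σ'' r ≠ some c) →
      (strip T a' b').card ≤ 3 * k - 2 ∧ ((strip T a' b').card = 3 * k - 2 → p ∈ strip T a' b') := by
    intro a' b' hf
    have h1 : strip T' a' b' ⊆ strip T a' b' :=
      filter_subset_filter _ (subset_insert _ _)
    have hf' : ∀ r ∈ strip T' a' b', σ' r ≠ some c :=
      fun r hr hsc => hf r (h1 hr) (hext r c hsc)
    have h2 := hA' c a' b' hf'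
    have h3 : strip T a' b' ⊆ insert p (strip T' a' b') := by
      intro r hr
      rw [strip, mem_filter, hTdef, mem_insert] at hr
      rcases hr.1 with h | h
      · exact mem_insert.mpr (Or.inl h)
      · exact mem_insert.mpr (Or.inr (mem_filter.mpr ⟨h, hr.2⟩))
    constructor
    · calc (strip T a' b').card ≤ (insert p (strip T' a' b')).card := card_le_card h3
        _ ≤ (strip T' a' b').card + 1 := card_insert_le _ _
        _ ≤ 3 * k - 3 + 1 := by omega
        _ = 3 * k - 2 := by omega
    · intro hEq
      by_contra hpn
      have h4 : strip T a' b' ⊆ strip T' a' b' := by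
        intro r hr
        have hr' := hr
        rw [strip, mem_filter, hTdef, mem_insert] at hr
        rcases hr.1 with h | h
        · exact absurd (h ▸ hr') hpn
        · exact mem_filter.mpr ⟨h, hr.2⟩
      have := card_le_card h4
      omega
  by_cases hA : AinvC k T σ'' c
  · exact ⟨σ'', Extends.refl k σ'', hCI, hB, hA⟩
  rw [AinvC] at hA
  push_neg at hA
  obtain ⟨a, b, hfree, hbig⟩ := hA
  have hkey := key a b hfree
  have hVcard : (strip T a b).card = 3 * k - 2 := by omega
  have hpV : p ∈ strip T a b := hkey.2 hVcard
  obtain ⟨q, hqV, hqnone, hqleft, hqright⟩ := exists_split k hk T σ'' c a b hx hCI hB hVcard hfree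
  set τ : Pt → Option (Fin k) := fun r => if r = q then some c else σ'' r with hσdef
  have hextq : Extends k σ'' τ := by
    intro r d h
    rw [hσdef]
    by_cases hr : r = q
    · rw [hr] at h; rw [h] at hqnone; exact absurd hqnone (by simp)
    · simp [hr, h]
  have hq3 : τ q = some c := by simp [hσdef]
  have hqab : a ≤ q.1 ∧ q.1 ≤ b := (mem_filter.mp hqV).2
  have hCI3 : ColoredIn k T τ := by
    intro r hr
    by_cases hrq : r = q
    · rw [hrq]; exact (mem_filter.mp hqV).1
    · apply hCI
      rw [hσdef] at hr; simp only [hrq, if_false] at hr; exact hr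
  have hB3 : Binv k T τ := by
    intro d q₁ q₂ h1 h2 hlt hno
    by_cases h1q : q₁ = q <;> by_cases h2q : q₂ = q
    · rw [h1q, h2q] at hlt; exact absurd hlt (lt_irrefl _)
    · -- q₁ = q : the new point on the left
      subst h1q
      have hdc : d = c := by
        rw [hq3] at h1; exact (Option.some_injective _ h1).symm
      subst hdc
      have h2' : σ'' q₂ = some d := by
        rw [hσdef] at h2; simp only [h2q, if_false] at h2; exact h2
      have hq₂T : q₂ ∈ T := hCI q₂ (by rw [h2']; simp)
      have hq₂V : q₂ ∉ strip T a b := fun h => hfree q₂ h h2'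
      have hq₂b : b < q₂.1 := by
        by_contra hc
        push_neg at hc
        exact hq₂V (mem_filter.mpr ⟨hq₂T, le_of_lt (lt_of_le_of_lt hqab.1 hlt), hc⟩)
      refine le_trans hqright (card_le_card ?_)
      intro u hu
      rw [mem_filter] at hu
      have huab := (mem_filter.mp hu.1).2
      exact mem_filter.mpr ⟨(mem_filter.mp hu.1).1, hu.2, lt_of_le_of_lt huab.2 hq₂b⟩
    · -- q₂ = q
      subst h2q
      have hdc : d = c := by
        rw [hq3] at h2; exact (Option.some_injective _ h2).symm
      subst hdc
      have h1' : σ'' q₁ = some d := by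
        rw [hσdef] at h1; simp only [h1q, if_false] at h1; exact h1
      have hq₁T : q₁ ∈ T := hCI q₁ (by rw [h1']; simp)
      have hq₁V : q₁ ∉ strip T a b := fun h => hfree q₁ h h1'
      have hq₁a : q₁.1 < a := by
        by_contra hc
        push_neg at hc
        exact hq₁V (mem_filter.mpr ⟨hq₁T, hc, le_of_lt (lt_of_lt_of_le hlt hqab.2)⟩)
      refine le_trans hqleft (card_le_card ?_)
      intro u hu
      rw [mem_filter] at hu
      have huab := (mem_filter.mp hu.1).2
      exact mem_filter.mpr ⟨(mem_filter.mp hu.1).1, lt_of_lt_of_le hq₁a huab.1, hu.2⟩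
    · -- neither is q
      have h1' : σ'' q₁ = some d := by
        rw [hσdef] at h1; simp only [h1q, if_false] at h1; exact h1
      have h2' : σ'' q₂ = some d := by
        rw [hσdef] at h2; simp only [h2q, if_false] at h2; exact h2
      apply hB d q₁ q₂ h1' h2' hlt
      intro r hr
      exact hno r (hextq r d hr)
  have hA3 : AinvC k T τ c := by
    intro a' b' hfree3
    by_contra hgt
    push_neg at hgt
    have hfree2 : ∀ r ∈ strip T a' b', σ'' r ≠ some c :=
      fun r hr hsc => hfree3 r hr (hextq r c hsc)
    have hkey' := key a' b' hfree2
    have hWcard : (strip T a' b').card = 3 * k - 2 := by omega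
    have hpW : p ∈ strip T a' b' := hkey'.2 hWcard
    have hqW : q ∉ strip T a' b' := fun h => hfree3 q h hq3
    -- hull argument
    have hpab : a ≤ p.1 ∧ p.1 ≤ b := (mem_filter.mp hpV).2
    have hpab' : a' ≤ p.1 ∧ p.1 ≤ b' := (mem_filter.mp hpW).2
    have hHfree : ∀ r ∈ strip T (min a a') (max b b'), σ'' r ≠ some c := by
      intro r hr
      rw [strip, mem_filter] at hr
      rcases interval_union hpab.1 hpab.2 hpab'.1 hpab'.2 hr.2.1 hr.2.2 with h | h
      · exact hfree r (mem_filter.mpr ⟨hr.1, h⟩)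
      · exact hfree2 r (mem_filter.mpr ⟨hr.1, h⟩)
    have hHub := (key (min a a') (max b b') hHfree).1
    have hVH : strip T a b ⊆ strip T (min a a') (max b b') := by
      intro r hr
      rw [strip, mem_filter] at hr ⊢
      exact ⟨hr.1, le_trans (min_le_left _ _) hr.2.1, le_trans hr.2.2 (le_max_left _ _)⟩
    have hWH : strip T a' b' ⊆ strip T (min a a') (max b b') := by
      intro r hr
      rw [strip, mem_filter] at hr ⊢
      exact ⟨hr.1, le_trans (min_le_right _ _) hr.2.1, le_trans hr.2.2 (le_max_right _ _)⟩
    have hVeq : strip T a b = strip T (min a a') (max b b') :=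
      Finset.eq_of_subset_of_card_le hVH (by omega)
    have hqfin : q ∈ strip T a' b' := by
      have hq' : q ∈ strip T (min a a') (max b b') := hVeq ▸ hqV
      have hWeq : strip T a' b' = strip T (min a a') (max b b') :=
        Finset.eq_of_subset_of_card_le hWH (by omega)
      rw [hWeq]; exact hq'
    exact hqW hqfin
  exact ⟨τ, hextq, hCI3, hB3, hA3⟩

/-- Process the arrival of a new point `p`, repairing all colors in `D`. -/
lemma process (k : ℕ) (hk : 1 ≤ k) (T' : Finset Pt) (p : Pt) (hp : p ∉ T')
    (hx : Set.InjOn Prod.fst ((insert p T' : Finset Pt) : Set Pt))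
    (σ' : Pt → Option (Fin k))
    (hA' : ∀ c', AinvC k T' σ' c')
    (hCI' : ColoredIn k T' σ')
    (hB' : Binv k T' σ')
    (D : Finset (Fin k)) :
    ∃ σ : Pt → Option (Fin k), Extends k σ' σ ∧ ColoredIn k (insert p T') σ ∧
      Binv k (insert p T') σ ∧ ∀ c ∈ D, AinvC k (insert p T') σ c := by
  classical
  induction D using Finset.induction_on with
  | empty =>
      refine ⟨σ', Extends.refl k σ', ?_, hB'.subset (subset_insert _ _), by simp⟩
      exact fun r hr => mem_insert.mpr (Or.inr (hCI' r hr))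
  | @insert c D hcD ih =>
      obtain ⟨σ, hext, hCI, hB, hA⟩ := ih
      obtain ⟨τ, hext2, hCI2, hB2, hA2⟩ := fix_color k hk T' p hp hx σ' σ c hA' hext hCI hB
      refine ⟨τ, hext.trans hext2, hCI2, hB2, ?_⟩
      intro c' hc'
      rcases mem_insert.mp hc' with h | h
      · rw [h]; exact hA2
      · exact (hA c' h).mono hext2

/-- The main sweep: a partial coloring of `T` such that every strip of every
`y`-prefix with at least `3k-2` points contains every color. -/
lemma history (k : ℕ) (hk : 1 ≤ k) :
    ∀ (n : ℕ) (T : Finset Pt), T.card = n → Set.InjOn Prod.fst (T : Set Pt) →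
    ∃ σ : Pt → Option (Fin k), ColoredIn k T σ ∧ Binv k T σ ∧ (∀ c, AinvC k T σ c) ∧
      ∀ (r a b : ℝ) (col : Fin k),
        3 * k - 2 ≤ (strip (T.filter fun p => p.2 ≤ r) a b).card →
        ∃ q ∈ strip (T.filter fun p => p.2 ≤ r) a b, σ q = some col := by
  intro n
  induction n using Nat.strong_induction_on with
  | _ n ih =>
    intro T hTn hx
    rcases T.eq_empty_or_nonempty with rfl | hTne
    · refine ⟨fun _ => none, fun p hp => absurd rfl hp, ?_, ?_, ?_⟩
      · intro c q₁ q₂ h1; exact absurd h1 (by simp)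
      · intro c a b _
        simp only [strip, filter_empty, card_empty]
        omega
      · intro r a b col hcard
        simp only [strip, filter_empty, card_empty] at hcard
        omega
    · obtain ⟨p, hpT, hmax⟩ := T.exists_max_image (fun q => q.2) hTne
      set T' := T.erase p with hT'def
      have hins : insert p T' = T := insert_erase hpT
      have hpn : p ∉ T' := notMem_erase _ _
      have hcard' : T'.card < n := by
        rw [← hTn, hT'def, card_erase_of_mem hpT]
        have : 0 < T.card := card_pos.mpr hTne
        omega
      have hx' : Set.InjOn Prod.fst (T' : Set Pt) :=
        hx.mono (by exact_mod_cast erase_subset _ _)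
      obtain ⟨σ', hCI', hB', hA', hHist'⟩ := ih T'.card hcard' T' rfl hx'
      obtain ⟨σ, hext, hCI, hB, hA⟩ :=
        process k hk T' p hpn (by rw [hins]; exact hx) σ' hA' hCI' hB' Finset.univ
      rw [hins] at hCI hB hA
      refine ⟨σ, hCI, hB, fun c => hA c (mem_univ c), ?_⟩
      intro r a b col hbig
      by_cases hr : p.2 ≤ r
      · have hfe : T.filter (fun q => q.2 ≤ r) = T :=
          filter_true_of_mem (fun q hq => le_trans (hmax q hq) hr)
        rw [hfe] at hbig ⊢
        by_contra hno
        push_neg at hno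
        have hfree : ∀ q ∈ strip T a b, σ q ≠ some col := by
          intro q hq hqc
          exact absurd hqc (hno q hq)
        have := hA col (mem_univ col) a b hfree
        omega
      · have hfe : T.filter (fun q => q.2 ≤ r) = T'.filter (fun q => q.2 ≤ r) := by
          ext q
          simp only [mem_filter, hT'def, mem_erase]
          constructor
          · rintro ⟨hq, hq2⟩
            refine ⟨⟨?_, hq⟩, hq2⟩
            rintro rfl
            exact hr hq2
          · rintro ⟨⟨_, hq⟩, hq2⟩
            exact ⟨hq, hq2⟩
        rw [hfe] at hbig ⊢
        obtain ⟨q, hq, hqc⟩ := hHist' r a b col hbig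
        exact ⟨q, hq, hext q col hqc⟩

end BR


/-- Membership in the bottomless rectangle `{(x,y) : a ≤ x ≤ b, y ≤ c}`. -/
def InBottomless (a b c : ℝ) (p : ℝ × ℝ) : Prop :=
  a ≤ p.1 ∧ p.1 ≤ b ∧ p.2 ≤ c

noncomputable instance (a b c : ℝ) :
    DecidablePred (fun p : ℝ × ℝ => InBottomless a b c p) := by
  unfold InBottomless; infer_instance

/-- Every finite planar point set (with distinct `x`- and `y`-coordinates) can
be `k`-colored so that every bottomless rectangle containing at least `3k - 2`
of the points contains a point of each color. -/
theorem bottomless_rectangles_coloring (k : ℕ) (hk : 1 ≤ k)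
    (S : Finset (ℝ × ℝ))
    (hx : Set.InjOn Prod.fst (S : Set (ℝ × ℝ)))
    (hy : Set.InjOn Prod.snd (S : Set (ℝ × ℝ))) :
    ∃ χ : ℝ × ℝ → Fin k, ∀ a b c : ℝ, a ≤ b →
      3 * k - 2 ≤ (S.filter (InBottomless a b c)).card →
      ∀ col : Fin k, ∃ p ∈ S.filter (InBottomless a b c), χ p = col := by
  classical
  obtain ⟨σ, _, _, _, hHist⟩ := BR.history k hk S.card S rfl hx
  refine ⟨fun p => (σ p).getD ⟨0, hk⟩, ?_⟩
  intro a b c _ hcard col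
  have hset : S.filter (InBottomless a b c) = BR.strip (S.filter fun p => p.2 ≤ c) a b := by
    ext q
    simp only [Finset.mem_filter, BR.strip, InBottomless]
    tauto
  rw [hset] at hcard ⊢
  obtain ⟨q, hq, hqc⟩ := hHist c a b col hcard
  exact ⟨q, hq, by simp [hqc]⟩
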